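/- For b = (b₁, b₂) ∈ ℝ² with b ≠ 0, A = [[1,c],[0,1]], and t = -|b|, if b₁ = 0 then det(A) + (t/|b|³)⟨((A+Aᵀ)/2) b, b⟩ = 0; moreover the gradient in b of the function b ↦ det(A) + (t/|b|³)(b₁² + c b₁b₂ + b₂²) at such a point equals (t b₂³ c/|b|⁵, -t b₂³/|b|⁵), which is nonzero when c ≠ 0 and b₂ ≠ 0. -/

import Mathlib

open Matrix

lemma aux_sqrt_cube (k x : ℝ) (h : x ^ 2 + k ≠ 0) (hnn : 0 ≤ x ^ 2 + k) :
    HasDerivAt (fun s : ℝ => Real.sqrt (s ^ 2 + k) ^ 3)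
      (3 * x * Real.sqrt (x ^ 2 + k)) x := by
  have h1 : HasDerivAt (fun s : ℝ => s ^ 2 + k) (2 * x) x := by
    simpa using (hasDerivAt_pow 2 x).add_const k
  have h2 := (Real.hasDerivAt_sqrt h).comp x h1
  have h3 := h2.pow 3
  refine h3.congr_deriv ?_
  symm
  have hs : Real.sqrt (x ^ 2 + k) ^ 2 = x ^ 2 + k := Real.sq_sqrt hnn
  have hs0 : Real.sqrt (x ^ 2 + k) ≠ 0 := by
    simpa [Real.sqrt_eq_zero', not_le] using lt_of_le_of_ne hnn (Ne.symm h)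
  field_simp
  simp only [Function.comp_apply]
  ring

theorem fold_nondegenerate (c b₁ b₂ t : ℝ) (hc : c ≠ 0) (hb₂ : b₂ ≠ 0)
    (hb₁ : b₁ = 0) (ht : t = -Real.sqrt (b₁ ^ 2 + b₂ ^ 2)) :
    (1 + t / Real.sqrt (b₁ ^ 2 + b₂ ^ 2) ^ 3 *
        (b₁ ^ 2 + c * b₁ * b₂ + b₂ ^ 2) = 0) ∧
    HasDerivAt (fun s : ℝ => (1 : ℝ) + t / Real.sqrt (s ^ 2 + b₂ ^ 2) ^ 3 *
        (s ^ 2 + c * s * b₂ + b₂ ^ 2))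
      (t * b₂ ^ 3 * c / Real.sqrt (b₁ ^ 2 + b₂ ^ 2) ^ 5) b₁ ∧
    HasDerivAt (fun s : ℝ => (1 : ℝ) + t / Real.sqrt (b₁ ^ 2 + s ^ 2) ^ 3 *
        (b₁ ^ 2 + c * b₁ * s + s ^ 2))
      (-(t * b₂ ^ 3) / Real.sqrt (b₁ ^ 2 + b₂ ^ 2) ^ 5) b₂ ∧
    (t * b₂ ^ 3 * c / Real.sqrt (b₁ ^ 2 + b₂ ^ 2) ^ 5,
      -(t * b₂ ^ 3) / Real.sqrt (b₁ ^ 2 + b₂ ^ 2) ^ 5) ≠ ((0 : ℝ), (0 : ℝ)) := by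
  subst hb₁
  have habs : (0:ℝ) < |b₂| := abs_pos.mpr hb₂
  have habs2 : |b₂| ^ 2 = b₂ ^ 2 := sq_abs b₂
  have hrr : Real.sqrt (0 ^ 2 + b₂ ^ 2) = |b₂| := by
    simp [Real.sqrt_sq_eq_abs]
  have htabs : t = -|b₂| := by rw [ht, hrr]
  rw [hrr]
  have habsne : |b₂| ≠ 0 := ne_of_gt habs
  refine ⟨?_, ?_, ?_, ?_⟩
  · rw [htabs]
    field_simp
    linear_combination habs2
  · -- derivative in first slot, at 0
    have hD := aux_sqrt_cube (b₂ ^ 2) 0 (by positivity) (by positivity)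
    have hD0 : Real.sqrt (0 ^ 2 + b₂ ^ 2) ^ 3 ≠ 0 := by
      rw [hrr]; positivity
    have hN : HasDerivAt (fun s : ℝ => s ^ 2 + c * s * b₂ + b₂ ^ 2)
        (2 * 0 + c * b₂) 0 := by
      have h1 : HasDerivAt (fun s : ℝ => s ^ 2 + c * s * b₂)
          (2 * 0 + c * b₂) 0 := by
        have h2 := (hasDerivAt_pow 2 (0:ℝ)).add
          (((hasDerivAt_id (0:ℝ)).const_mul c).mul_const b₂)
        exact h2.congr_deriv (by simp)
      simpa using h1.add_const (b₂ ^ 2)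
    have hQ := (hN.div hD hD0).const_mul t
    have hF := hQ.const_add 1
    have hfun : (fun s : ℝ => (1:ℝ) + t / Real.sqrt (s ^ 2 + b₂ ^ 2) ^ 3 *
        (s ^ 2 + c * s * b₂ + b₂ ^ 2)) =
        fun s : ℝ => 1 + t * ((s ^ 2 + c * s * b₂ + b₂ ^ 2) /
          Real.sqrt (s ^ 2 + b₂ ^ 2) ^ 3) := by
      funext s; ring
    rw [hfun]
    refine hF.congr_deriv ?_
    symm
    rw [hrr]
    field_simp
    linear_combination -t * b₂ * c * habs2
  · -- derivative in second slot, at b₂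
    have hD : HasDerivAt (fun s : ℝ => Real.sqrt (s ^ 2) ^ 3)
        (3 * b₂ * Real.sqrt (b₂ ^ 2)) b₂ := by
      simpa using aux_sqrt_cube 0 b₂ (by positivity) (by positivity)
    have hD0 : Real.sqrt (b₂ ^ 2) ^ 3 ≠ 0 := by
      rw [Real.sqrt_sq_eq_abs]; positivity
    have hN : HasDerivAt (fun s : ℝ => s ^ 2) (2 * b₂) b₂ := by
      simpa using hasDerivAt_pow 2 b₂
    have hQ := (hN.div hD hD0).const_mul t
    have hF := hQ.const_add 1
    have hfun : (fun s : ℝ => (1:ℝ) + t / Real.sqrt (0 ^ 2 + s ^ 2) ^ 3 *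
        (0 ^ 2 + c * 0 * s + s ^ 2)) =
        fun s : ℝ => 1 + t * (s ^ 2 / Real.sqrt (s ^ 2) ^ 3) := by
      funext s
      rw [show (0:ℝ) ^ 2 + s ^ 2 = s ^ 2 by ring]
      ring
    rw [hfun]
    refine hF.congr_deriv ?_
    symm
    rw [Real.sqrt_sq_eq_abs]
    field_simp
    linear_combination -2 * t * habs2
  · intro h
    have h1 := congrArg Prod.fst h
    simp only at h1
    rw [htabs] at h1
    have : -|b₂| * b₂ ^ 3 * c / |b₂| ^ 5 ≠ 0 := by
      apply div_ne_zero _ (by positivity)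
      simp only [mul_ne_zero_iff]
      exact ⟨⟨by simpa using habsne, pow_ne_zero 3 hb₂⟩, hc⟩
    exact this h1
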